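/- arXiv:2508.07533 — 2 statements merged into one kernel-verified Lean document; each statement's English description precedes it below -/
import Mathlib

section
/- Let r ≥ 2 and n be positive integers with n = qr + p, 0 ≤ p ≤ r−1. If G is an n-vertex graph such that G minus some vertex u is r-partite, and e(G) ≥ (1 − 1/r)·n²/2 − n/r + p(p+2)/(2r) − p/2 + 1, then the degree of u in G satisfies d(u) ≥ (1 − 2/r)·n + (p+1)²/(2r) − (p−1)/2. -/
open SimpleGraph Finset

/-- An `r`-colorable graph on `m` vertices has at most `(1 - 1/r) m² / 2` edges. -/
lemma colorable_edge_bound {W : Type*} [Fintype W] [DecidableEq W] (H : SimpleGraph W)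
    [DecidableRel H.Adj] {r : ℕ} (hr : 0 < r) (hc : H.Colorable r) :
    (#H.edgeFinset : ℝ) ≤ (1 - 1 / (r : ℝ)) * (Fintype.card W : ℝ) ^ 2 / 2 := by
  obtain ⟨C⟩ := hc
  set m := Fintype.card W with hm
  set t : Fin r → ℕ := fun i => #({v : W | C v = i} : Finset W) with ht
  -- each vertex's degree is at most m - t (C v)
  have hdeg : ∀ v : W, (H.degree v : ℝ) ≤ (m : ℝ) - (t (C v) : ℝ) := by
    intro v
    have hsub : H.neighborFinset v ⊆ (univ : Finset W) \ ({w : W | C w = C v} : Finset W) := by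
      intro w hw
      rw [mem_neighborFinset] at hw
      simp only [mem_sdiff, mem_univ, true_and, mem_filter]
      intro hww
      exact C.valid hw.symm hww
    have := Finset.card_le_card hsub
    rw [card_sdiff_of_subset (by intro x _; exact mem_univ x), card_univ] at this
    have hle : t (C v) ≤ m := by
      rw [ht, hm]; exact Finset.card_le_card (fun x _ => mem_univ x)
    calc (H.degree v : ℝ) ≤ ((m - t (C v) : ℕ) : ℝ) := by exact_mod_cast this
      _ = (m : ℝ) - (t (C v) : ℝ) := by rw [Nat.cast_sub hle]
  -- sum of t (C v) over v equals sum of t i ^ 2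
  have hfib : ∑ v : W, (t (C v) : ℝ) = ∑ i : Fin r, (t i : ℝ) ^ 2 := by
    rw [← Finset.sum_fiberwise' (univ : Finset W) C (fun i => (t i : ℝ))]
    refine Finset.sum_congr rfl fun i _ => ?_
    rw [Finset.sum_const, ht]
    simp [sq, mul_comm]
  have hsum_t : ∑ i : Fin r, (t i : ℝ) = (m : ℝ) := by
    rw [ht, hm]
    rw [← Nat.cast_sum]
    norm_cast
    rw [← Finset.card_univ]
    exact (Finset.card_eq_sum_card_fiberwise (fun v _ => mem_univ (C v))).symm
  -- Cauchy-Schwarz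
  have hcs : (m : ℝ) ^ 2 / r ≤ ∑ i : Fin r, (t i : ℝ) ^ 2 := by
    have h := sq_sum_le_card_mul_sum_sq (s := (univ : Finset (Fin r)))
      (f := fun i => (t i : ℝ))
    rw [hsum_t, Finset.card_univ, Fintype.card_fin] at h
    rw [div_le_iff₀ (by positivity)]
    linarith [h]
  -- degree sum formula
  have hds : (2 : ℝ) * #H.edgeFinset = ∑ v : W, (H.degree v : ℝ) := by
    rw [← Nat.cast_sum]
    norm_cast
    rw [H.sum_degrees_eq_twice_card_edges]
  have h1 : ∑ v : W, (H.degree v : ℝ) ≤ (m : ℝ) ^ 2 - ∑ i : Fin r, (t i : ℝ) ^ 2 := by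
    calc ∑ v : W, (H.degree v : ℝ) ≤ ∑ v : W, ((m : ℝ) - (t (C v) : ℝ)) :=
          Finset.sum_le_sum fun v _ => hdeg v
      _ = (m : ℝ) * m - ∑ v : W, (t (C v) : ℝ) := by
          rw [Finset.sum_sub_distrib, Finset.sum_const, Finset.card_univ, ← hm, nsmul_eq_mul]
      _ = (m : ℝ) ^ 2 - ∑ i : Fin r, (t i : ℝ) ^ 2 := by rw [hfib, sq]
  have hr' : (0 : ℝ) < r := by exact_mod_cast hr
  have h2 : (2 : ℝ) * #H.edgeFinset ≤ (m : ℝ) ^ 2 - (m : ℝ) ^ 2 / r := by linarith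
  have h3 : (1 - 1 / (r : ℝ)) * (m : ℝ) ^ 2 / 2 = ((m : ℝ) ^ 2 - (m : ℝ) ^ 2 / r) / 2 := by
    ring
  rw [h3]; linarith

/-- Deleting a vertex removes at most `degree u` edges. -/
lemma card_edge_le_induce {n : ℕ} (G : SimpleGraph (Fin n)) (u : Fin n)
    [DecidableRel G.Adj] [DecidableRel (G.induce {v | v ≠ u}).Adj]
    [Fintype (G.induce {v | v ≠ u}).edgeSet] :
    #G.edgeFinset ≤ #(G.induce {v | v ≠ u}).edgeFinset + G.degree u := by
  classical
  have hsub : G.edgeFinset ⊆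
      ((G.induce {v | v ≠ u}).edgeFinset.image (Sym2.map (Subtype.val))) ∪
        G.incidenceFinset u := by
    intro e he
    induction e using Sym2.ind with
    | _ a b =>
      rw [mem_edgeFinset, mem_edgeSet] at he
      by_cases hab : a = u ∨ b = u
      · refine Finset.mem_union_right _ ?_
        rw [mem_incidenceFinset]
        refine ⟨he, ?_⟩
        rcases hab with h | h <;> simp [h]
      · push_neg at hab
        refine Finset.mem_union_left _ ?_
        rw [Finset.mem_image]
        refine ⟨s(⟨a, hab.1⟩, ⟨b, hab.2⟩), ?_, rfl⟩
        rw [mem_edgeFinset, mem_edgeSet]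
        exact he
  calc #G.edgeFinset
      ≤ #(((G.induce {v | v ≠ u}).edgeFinset.image (Sym2.map (Subtype.val))) ∪
          G.incidenceFinset u) := Finset.card_le_card hsub
    _ ≤ #((G.induce {v | v ≠ u}).edgeFinset.image (Sym2.map (Subtype.val)))
        + #(G.incidenceFinset u) := Finset.card_union_le _ _
    _ ≤ #(G.induce {v | v ≠ u}).edgeFinset + G.degree u := by
        rw [G.card_incidenceFinset_eq_degree]
        gcongr
        exact Finset.card_image_le

/-- If `G` minus a vertex `u` is `r`-partite and
`e(G) ≥ (1 − 1/r)·n²/2 − n/r + p(p+2)/(2r) − p/2 + 1` (where `n = qr + p`, `0 ≤ p ≤ r−1`),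
then `d(u) ≥ (1 − 2/r)·n + (p+1)²/(2r) − (p−1)/2`. -/
theorem degree_lower_bound_delete_vertex (r n q p : ℕ) (hr : 2 ≤ r) (hn : 1 ≤ n)
    (hnp : n = q * r + p) (hp : p ≤ r - 1)
    (G : SimpleGraph (Fin n)) (u : Fin n)
    (hpart : (G.induce {v | v ≠ u}).Colorable r)
    (he : (1 - 1 / (r : ℝ)) * (n : ℝ) ^ 2 / 2 - (n : ℝ) / r
        + (p : ℝ) * ((p : ℝ) + 2) / (2 * r) - (p : ℝ) / 2 + 1 ≤ (G.edgeSet.ncard : ℝ)) :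
    (1 - 2 / (r : ℝ)) * (n : ℝ) + ((p : ℝ) + 1) ^ 2 / (2 * r) - ((p : ℝ) - 1) / 2
      ≤ ((G.neighborSet u).ncard : ℝ) := by
  classical
  have hr0 : 0 < r := by omega
  have hrR : (0 : ℝ) < r := by exact_mod_cast hr0
  -- identify ncards with finset cards
  have hE : G.edgeSet.ncard = #G.edgeFinset := by
    rw [Set.ncard_eq_toFinset_card', edgeFinset]
  have hN : (G.neighborSet u).ncard = G.degree u := by
    rw [Set.ncard_eq_toFinset_card', SimpleGraph.degree, neighborFinset]
  -- card of the vertex set minus u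
  have hcard : Fintype.card ({v : Fin n | v ≠ u} : Set (Fin n)) = n - 1 := by
    have : Fintype.card ({v : Fin n | v ≠ u} : Set (Fin n))
        = Fintype.card {v : Fin n // v ≠ u} := Fintype.card_congr (Equiv.refl _)
    rw [this, Fintype.card_subtype_compl, Fintype.card_subtype_eq, Fintype.card_fin]
  -- edge bound for the induced graph
  have hHbound : (#(G.induce {v | v ≠ u}).edgeFinset : ℝ)
      ≤ (1 - 1 / (r : ℝ)) * ((n : ℝ) - 1) ^ 2 / 2 := by
    have := colorable_edge_bound (G.induce {v | v ≠ u}) hr0 hpart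
    rw [hcard] at this
    have hc : ((n - 1 : ℕ) : ℝ) = (n : ℝ) - 1 := by
      have : (1 : ℕ) ≤ n := hn
      push_cast [Nat.cast_sub this]
      ring
    rwa [hc] at this
  have hdel := card_edge_le_induce G u
  have hdelR : (#G.edgeFinset : ℝ) ≤ (#(G.induce {v | v ≠ u}).edgeFinset : ℝ)
      + (G.degree u : ℝ) := by exact_mod_cast hdel
  rw [hE] at he
  rw [hN]
  -- key arithmetic identity
  have hkey : (1 - 1 / (r : ℝ)) * (n : ℝ) ^ 2 / 2 - (n : ℝ) / r
        + (p : ℝ) * ((p : ℝ) + 2) / (2 * r) - (p : ℝ) / 2 + 1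
        - (1 - 1 / (r : ℝ)) * ((n : ℝ) - 1) ^ 2 / 2
      = (1 - 2 / (r : ℝ)) * (n : ℝ) + ((p : ℝ) + 1) ^ 2 / (2 * r) - ((p : ℝ) - 1) / 2 := by
    field_simp
    ring
  linarith
end

section
/- Let r ≥ 3 and n ≥ r + 3. If G is an n-vertex graph whose chromatic number is at most r − 1, then e(G) < (1 − 1/r)·n²/2 − n/r + p(p+2)/(2r) − p/2 + 1, where n = qr + p with 0 ≤ p ≤ r − 1. -/
open SimpleGraph

/-- Let `r ≥ 3`, `n ≥ r + 3`, `n = qr + p` with `0 ≤ p ≤ r−1`. If `G` is an `n`-vertex graph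
with chromatic number at most `r − 1`, then
`e(G) < (1 − 1/r)·n²/2 − n/r + p(p+2)/(2r) − p/2 + 1`. -/
theorem small_chromatic_few_edges (r n q p : ℕ) (hr : 3 ≤ r) (hn : r + 3 ≤ n)
    (hnp : n = q * r + p) (hp : p ≤ r - 1)
    (G : SimpleGraph (Fin n)) (hχ : G.Colorable (r - 1)) :
    (G.edgeSet.ncard : ℝ) < (1 - 1 / (r : ℝ)) * (n : ℝ) ^ 2 / 2 - (n : ℝ) / r
        + (p : ℝ) * ((p : ℝ) + 2) / (2 * r) - (p : ℝ) / 2 + 1 := by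
  classical
  open Finset in
  obtain ⟨C⟩ := hχ
  set H : SimpleGraph (Fin n) := (⊤ : SimpleGraph (Fin (r - 1))).comap C with hH
  have hGH : G ≤ H := fun {u v} h => C.valid h
  set a : Fin (r - 1) → ℕ := fun c => #(univ.filter (fun u => C u = c)) with ha
  have hdeg : ∀ u : Fin n, H.degree u + a (C u) = n := by
    intro u
    have h1 : H.degree u = #(univ.filter (fun v => ¬ C u = C v)) := by
      rw [degree, neighborFinset_eq_filter]
      congr 1
    have h2 : a (C u) = #(univ.filter (fun v => C u = C v)) := by
      simp only [ha, eq_comm]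
    rw [h1, h2, add_comm, card_filter_add_card_filter_not]
    simp
  have hsum : 2 * #H.edgeFinset + ∑ c, (a c)^2 = n * n := by
    have h3 : ∑ u : Fin n, (H.degree u + a (C u)) = n * n := by
      rw [Finset.sum_congr rfl (fun u _ => hdeg u)]
      simp [mul_comm]
    rw [Finset.sum_add_distrib, sum_degrees_eq_twice_card_edges] at h3
    have h4 : ∑ u : Fin n, a (C u) = ∑ c, (a c)^2 := by
      rw [← Finset.sum_fiberwise univ C (fun u => a (C u))]
      refine Finset.sum_congr rfl fun c _ => ?_
      rw [Finset.sum_congr rfl (fun u hu => by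
        rw [(Finset.mem_filter.1 hu).2]), Finset.sum_const]
      show a c • a c = a c ^ 2
      rw [smul_eq_mul, sq]
    rw [h4] at h3
    exact h3
  have htot : ∑ c, a c = n := by
    have := Finset.card_eq_sum_card_fiberwise
      (f := C) (s := (univ : Finset (Fin n))) (t := (univ : Finset (Fin (r-1)))) (by simp)
    simpa using this.symm
  have hpt : ∀ c : Fin (r - 1), (2*q+1) * a c ≤ (a c)^2 + q*(q+1) := by
    intro c
    have h := Int.le_self_sq ((a c : ℤ) - q)
    zify
    nlinarith [h]
  have hS : (2*q+1) * n ≤ (∑ c, (a c)^2) + q*(q+1)*(r-1) := by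
    calc (2*q+1) * n = ∑ c, (2*q+1) * a c := by rw [← Finset.mul_sum, htot]
    _ ≤ ∑ c, ((a c)^2 + q*(q+1)) := Finset.sum_le_sum fun c _ => hpt c
    _ = (∑ c, (a c)^2) + q*(q+1)*(r-1) := by
        rw [Finset.sum_add_distrib, Finset.sum_const]
        simp [mul_comm]
  have hmono : G.edgeSet.ncard ≤ #H.edgeFinset := by
    rw [Set.ncard_eq_toFinset_card']
    exact Finset.card_le_card (by simpa [Set.toFinset_subset_toFinset, edgeSet_subset_edgeSet]
      using hGH)
  -- move to ℝ
  have hr0 : (0:ℝ) < r := by positivity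
  have hrc : ((r - 1 : ℕ) : ℝ) = (r:ℝ) - 1 := by
    rw [Nat.cast_sub (by omega)]; simp
  have e1 : 2 * (#H.edgeFinset : ℝ) + ((∑ c, (a c)^2 : ℕ) : ℝ) = (n:ℝ) * n := by
    exact_mod_cast congrArg (Nat.cast : ℕ → ℝ) hsum
  have e2 : (2*(q:ℝ)+1) * n ≤ ((∑ c, (a c)^2 : ℕ) : ℝ) + q*(q+1)*((r:ℝ)-1) := by
    have := (Nat.cast_le (α := ℝ)).2 hS
    push_cast [hrc] at this ⊢
    linarith
  have e3 : (G.edgeSet.ncard : ℝ) ≤ (#H.edgeFinset : ℝ) := by exact_mod_cast hmono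
  have key : 2 * (G.edgeSet.ncard : ℝ) ≤ (n:ℝ)^2 - (2*(q:ℝ)+1)*n + q*(q+1)*((r:ℝ)-1) := by
    nlinarith [e1, e2, e3]
  have hnR : (n:ℝ) = q * r + p := by exact_mod_cast congrArg (Nat.cast : ℕ → ℝ) hnp
  have hq2 : (q:ℝ) ≤ (q:ℝ)^2 := by
    have : q ≤ q^2 := Nat.le_self_pow two_ne_zero q
    exact_mod_cast this
  have hB : (1 - 1 / (r : ℝ)) * (n : ℝ) ^ 2 / 2 - (n : ℝ) / r
        + (p : ℝ) * ((p : ℝ) + 2) / (2 * r) - (p : ℝ) / 2 + 1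
      = (((r:ℝ)-1)*(n:ℝ)^2 - 2*n + p*(p+2) - p*r + 2*r) / (2*r) := by
    field_simp
  rw [hB, lt_div_iff₀ (by positivity)]
  rw [hnR] at key ⊢
  nlinarith [mul_le_mul_of_nonneg_left key hr0.le,
    mul_nonneg hr0.le (sub_nonneg.2 hq2), hr0]
end
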